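/- arXiv:1503.02722 — 9 statements merged into one kernel-verified Lean document; each statement's English description precedes it below -/
import Mathlib

section
/- Let x, y be unit vectors in R^n with ⟨x,y⟩ ≠ 0, let u_1,...,u_k be an orthonormal set, and let P be the orthogonal projection onto span{u_1,...,u_k}. Assume {x,u_1,...,u_k} is linearly independent. Then the least-squares coefficient of x in the regression of y onto {x,u_1,...,u_k} has sign different from the sign of ⟨x,y⟩ if and only if ⟨Px,Py⟩/⟨x,y⟩ > 1. -/
open RealInnerProductSpace

lemma perp_of_min {E : Type*} [NormedAddCommGroup E] [InnerProductSpace ℝ E]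
    (r w : E) (hw : ‖w‖ = 1) (h : ∀ t : ℝ, ‖r‖ ≤ ‖r - t • w‖) : ⟪r, w⟫ = 0 := by
  set t : ℝ := ⟪r, w⟫ with ht
  have h1 := h t
  have h2 : ‖r - t • w‖ ^ 2 = ‖r‖ ^ 2 - 2 * t * ⟪r, w⟫ + t ^ 2 := by
    rw [@norm_sub_sq_real, real_inner_smul_right, norm_smul]
    simp [hw, sq_abs]
    ring
  have h3 : ‖r‖ ^ 2 ≤ ‖r - t • w‖ ^ 2 := by
    apply pow_le_pow_left₀ (norm_nonneg r) h1
  have ht2 : t ^ 2 ≤ 0 := by nlinarith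
  nlinarith [sq_nonneg t]

/-- For unit vectors `x, y` with `⟪x,y⟫ ≠ 0`, an orthonormal family `u`,
`P` the orthogonal projection onto `span{u₁,…,u_k}` (so `P z = ∑ i, ⟪z, u i⟫ • u i`),
and `{x, u₁, …, u_k}` linearly independent, the least-squares coefficient of `x` in
the regression of `y` onto `{x, u₁,…,u_k}` has sign different from `⟪x,y⟫`
(i.e. their product is negative) iff `⟪Px, Py⟫ / ⟪x,y⟫ > 1`. -/
theorem stmt1 (n k : ℕ) (x y : EuclideanSpace ℝ (Fin n))
    (hx : ‖x‖ = 1) (hy : ‖y‖ = 1) (hxy : ⟪x, y⟫ ≠ 0)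
    (u : Fin k → EuclideanSpace ℝ (Fin n)) (hu : Orthonormal ℝ u)
    (hli : LinearIndependent ℝ (Fin.cons x u : Fin (k + 1) → EuclideanSpace ℝ (Fin n)))
    (β : Fin (k + 1) → ℝ)
    (hmin : ∀ (γ : Fin (k + 1) → ℝ),
      ‖y - (β 0 • x + ∑ i, β i.succ • u i)‖ ≤ ‖y - (γ 0 • x + ∑ i, γ i.succ • u i)‖) :
    β 0 * ⟪x, y⟫ < 0 ↔
      ⟪∑ i, ⟪x, u i⟫ • u i, ∑ i, ⟪y, u i⟫ • u i⟫ / ⟪x, y⟫ > 1 := by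
  set r : EuclideanSpace ℝ (Fin n) := y - (β 0 • x + ∑ i, β i.succ • u i) with hr
  -- orthogonality to x
  have hrx : ⟪r, x⟫ = 0 := by
    apply perp_of_min r x hx
    intro t
    have h := hmin (fun i => β i + t * (if i = 0 then 1 else 0))
    simp only [if_pos rfl, if_true, Fin.succ_ne_zero, if_false, mul_one, mul_zero, add_zero] at h
    have he : y - ((β 0 + t) • x + ∑ i, β i.succ • u i) = r - t • x := by
      rw [hr]; module
    rw [he] at h
    exact h
  -- orthogonality to each u m
  have hru : ∀ m : Fin k, ⟪r, u m⟫ = 0 := by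
    intro m
    apply perp_of_min r (u m) (hu.1 m)
    intro t
    have h := hmin (fun i => β i + t * (if i = m.succ then 1 else 0))
    have h0 : ((0 : Fin (k + 1)) = m.succ) = False := by
      simp [(Fin.succ_ne_zero m).symm]
    simp only [h0, if_false, mul_zero, add_zero, Fin.succ_inj] at h
    have hsum : ∑ i : Fin k, (β i.succ + t * (if i = m then 1 else 0)) • u i
        = (∑ i : Fin k, β i.succ • u i) + t • u m := by
      have step : ∀ i : Fin k, (β i.succ + t * (if i = m then 1 else 0)) • u i
          = β i.succ • u i + (if i = m then t • u m else 0) := by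
        intro i
        by_cases hi : i = m
        · subst hi; simp [add_smul]
        · simp [hi]
      rw [Finset.sum_congr rfl (fun i _ => step i), Finset.sum_add_distrib,
        Finset.sum_ite_eq' Finset.univ m]
      simp
    rw [hsum] at h
    have he : y - (β 0 • x + ((∑ i : Fin k, β i.succ • u i) + t • u m)) = r - t • u m := by
      rw [hr]; module
    rw [he] at h
    exact h
  -- notation
  set a : Fin k → ℝ := fun i => ⟪x, u i⟫ with ha
  set b : Fin k → ℝ := fun i => ⟪y, u i⟫ with hb
  set c : ℝ := ⟪x, y⟫ with hc
  set S : ℝ := ∑ i, a i * b i with hS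
  set Q : ℝ := ∑ i, a i * a i with hQ
  -- β coefficients from orthogonality to u m
  have hx2 : ⟪x, x⟫ = 1 := by
    rw [real_inner_self_eq_norm_sq, hx]; norm_num
  have hbeta : ∀ m : Fin k, β m.succ = b m - β 0 * a m := by
    intro m
    have h := hru m
    rw [hr, inner_sub_left, inner_add_left, real_inner_smul_left,
      hu.inner_left_fintype] at h
    have hbm : ⟪y, u m⟫ = b m := rfl
    have ham : ⟪x, u m⟫ = a m := rfl
    simp only [starRingEnd_apply, star_trivial] at h
    rw [hbm, ham] at h
    linarith
  -- orthogonality to x gives the key equation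
  have hkey : β 0 * (1 - Q) = c - S := by
    have h := hrx
    rw [hr, inner_sub_left, inner_add_left, real_inner_smul_left, sum_inner] at h
    simp only [real_inner_smul_left] at h
    rw [← real_inner_comm y x, ← hc, hx2] at h
    have hs2 : ∑ i : Fin k, β i.succ * ⟪u i, x⟫ = S - β 0 * Q := by
      rw [hS, hQ, Finset.mul_sum, ← Finset.sum_sub_distrib]
      apply Finset.sum_congr rfl
      intro i _
      rw [← real_inner_comm (u i) x, hbeta i]
      show (b i - β 0 * a i) * a i = a i * b i - β 0 * (a i * a i)
      ring
    rw [hs2] at h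
    linarith
  -- Q < 1 from linear independence
  have hQlt : Q < 1 := by
    rw [linearIndependent_fin_cons] at hli
    have hxs : x ∉ Submodule.span ℝ (Set.range u) := hli.2
    have hne : x - ∑ i, a i • u i ≠ 0 := by
      intro hcon
      apply hxs
      rw [sub_eq_zero.mp hcon]
      exact Submodule.sum_mem _ (fun i _ => Submodule.smul_mem _ _
        (Submodule.subset_span (Set.mem_range_self i)))
    have hpos : 0 < ‖x - ∑ i, a i • u i‖ ^ 2 := pow_pos (norm_pos_iff.mpr hne) 2
    have hnorm : ‖x - ∑ i, a i • u i‖ ^ 2 = 1 - Q := by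
      rw [@norm_sub_sq_real]
      have h1 : ⟪x, ∑ i, a i • u i⟫ = Q := by
        rw [inner_sum, hQ]
        exact Finset.sum_congr rfl fun i _ => by rw [real_inner_smul_right]
      have h2 : ‖∑ i, a i • u i‖ ^ 2 = Q := by
        rw [@norm_sq_eq_re_inner ℝ, hu.inner_sum]
        simp [hQ]
      rw [h1, h2, hx]
      ring
    rw [hnorm] at hpos
    linarith
  -- RHS inner product equals S
  have hrhs : ⟪∑ i, (a i) • u i, ∑ i, (b i) • u i⟫ = S := by
    rw [hu.inner_sum]
    simp [hS]
  rw [show (∑ i, ⟪x, u i⟫ • u i) = ∑ i, a i • u i from rfl,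
    show (∑ i, ⟪y, u i⟫ • u i) = ∑ i, b i • u i from rfl, hrhs]
  -- final algebra
  have hc2 : 0 < c * c := mul_self_pos.mpr hxy
  have h1mQ : 0 < 1 - Q := by linarith
  have hdiveq : S / c = (S * c) / (c * c) := by field_simp
  have e : c * c - S * c = (β 0 * c) * (1 - Q) := by
    have e1 : c * c - S * c = (c - S) * c := by ring
    rw [e1, ← hkey]; ring
  rw [gt_iff_lt, hdiveq, one_lt_div hc2]
  constructor
  · intro h
    have := mul_neg_of_neg_of_pos h h1mQ
    linarith
  · intro h
    by_contra hge
    push_neg at hge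
    have := mul_nonneg hge (le_of_lt h1mQ)
    linarith
end

section
/- Let x, y be unit vectors in R^n with r := ⟨x,y⟩ > 0, let v = x + y, and let P be an orthogonal projection onto a subspace U of R^n. If ‖Pv‖²/‖v‖² < 2r/(1+r), then ⟨x,y⟩ − ⟨Px,Py⟩ > 0. -/
open RealInnerProductSpace

/-- Let `x, y` be unit vectors with `r := ⟪x,y⟫ > 0`, `v = x + y`, and `P`
the orthogonal projection onto a subspace `U`. If `‖Pv‖²/‖v‖² < 2r/(1+r)` then
`⟪x,y⟫ − ⟪Px, Py⟫ > 0`. -/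
theorem stmt3 (n : ℕ) (x y : EuclideanSpace ℝ (Fin n))
    (hx : ‖x‖ = 1) (hy : ‖y‖ = 1) (hr : 0 < ⟪x, y⟫)
    (U : Submodule ℝ (EuclideanSpace ℝ (Fin n)))
    (h : ‖(U.orthogonalProjectionOnto (x + y) : EuclideanSpace ℝ (Fin n))‖ ^ 2 / ‖x + y‖ ^ 2 <
        2 * ⟪x, y⟫ / (1 + ⟪x, y⟫)) :
    0 < ⟪x, y⟫ - ⟪(U.orthogonalProjectionOnto x : EuclideanSpace ℝ (Fin n)),
      (U.orthogonalProjectionOnto y : EuclideanSpace ℝ (Fin n))⟫ := by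
  set r := ⟪x, y⟫ with hrdef
  have hv : ‖x + y‖ ^ 2 = 2 * (1 + r) := by
    rw [norm_add_sq_real, hx, hy]; ring
  have hvpos : (0:ℝ) < ‖x + y‖ ^ 2 := by rw [hv]; nlinarith
  have h1r : (0:ℝ) < 1 + r := by nlinarith
  have h4 : ‖(U.orthogonalProjectionOnto (x + y) : EuclideanSpace ℝ (Fin n))‖ ^ 2 < 4 * r := by
    rw [div_lt_div_iff₀ hvpos h1r, hv] at h
    nlinarith [h]
  have hsplit : (U.orthogonalProjectionOnto (x + y) : EuclideanSpace ℝ (Fin n)) =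
      (U.orthogonalProjectionOnto x : EuclideanSpace ℝ (Fin n)) +
      (U.orthogonalProjectionOnto y : EuclideanSpace ℝ (Fin n)) := by
    rw [map_add]; rfl
  set px := (U.orthogonalProjectionOnto x : EuclideanSpace ℝ (Fin n))
  set py := (U.orthogonalProjectionOnto y : EuclideanSpace ℝ (Fin n))
  have hexp : ‖px + py‖ ^ 2 = ‖px‖ ^ 2 + 2 * ⟪px, py⟫ + ‖py‖ ^ 2 := norm_add_sq_real px py
  rw [hsplit, hexp] at h4
  have hcs : ⟪px, py⟫ ≤ ‖px‖ * ‖py‖ := real_inner_le_norm px py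
  nlinarith [sq_nonneg (‖px‖ - ‖py‖)]
end

section
/- Let x, y be unit vectors in R^n and let u be a unit vector with P the projection onto span{u}, i.e., Pz = ⟨z,u⟩u. Suppose r := ⟨x,y⟩ > 0. Then the regression coefficient of x in the regression of y onto {x,u} has opposite sign from r if and only if ⟨x,u⟩·⟨y,u⟩ > r. -/
open RealInnerProductSpace

lemma ortho_of_min {n : ℕ} (e v : EuclideanSpace ℝ (Fin n))
    (h : ∀ t : ℝ, ‖e‖ ≤ ‖e - t • v‖) : ⟪e, v⟫ = 0 := by
  by_contra hne
  have hv0 : v ≠ 0 := by rintro rfl; simp at hne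
  have hv : (0:ℝ) < ‖v‖ ^ 2 := by
    have := norm_pos_iff.mpr hv0
    positivity
  set t := ⟪e, v⟫ / ‖v‖ ^ 2 with ht
  have h1 := h t
  have h2 : ‖e - t • v‖ ^ 2 = ‖e‖ ^ 2 - ⟪e, v⟫ ^ 2 / ‖v‖ ^ 2 := by
    rw [norm_sub_sq_real, real_inner_smul_right, norm_smul, ht]
    simp only [norm_mul, Real.norm_eq_abs]
    rw [mul_pow, sq_abs]
    field_simp
    ring
  have h3 : ‖e‖ ^ 2 ≤ ‖e - t • v‖ ^ 2 := by
    apply pow_le_pow_left₀ (norm_nonneg _) h1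
  rw [h2] at h3
  have : ⟪e, v⟫ ^ 2 / ‖v‖ ^ 2 ≤ 0 := by linarith
  have hpos : (0:ℝ) < ⟪e, v⟫ ^ 2 / ‖v‖ ^ 2 := by positivity
  linarith

/-- For unit vectors `x, y, u` with `{x, u}` linearly independent and
`r := ⟪x,y⟫ > 0`, the least-squares coefficient of `x` in the regression of `y` onto
`{x, u}` (without intercept) is negative iff `⟪x,u⟫·⟪y,u⟫ > r`. -/
theorem stmt7 (n : ℕ) (x y u : EuclideanSpace ℝ (Fin n))
    (hx : ‖x‖ = 1) (hy : ‖y‖ = 1) (hu : ‖u‖ = 1)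
    (hli : LinearIndependent ℝ ![x, u])
    (hr : 0 < ⟪x, y⟫) (b c : ℝ)
    (hmin : ∀ b' c' : ℝ, ‖y - (b • x + c • u)‖ ≤ ‖y - (b' • x + c' • u)‖) :
    b < 0 ↔ ⟪x, u⟫ * ⟪y, u⟫ > ⟪x, y⟫ := by
  set e := y - (b • x + c • u) with he
  have hex : ⟪e, x⟫ = 0 := by
    apply ortho_of_min
    intro t
    have := hmin (b + t) c
    convert this using 2
    rw [he]
    module
  have heu : ⟪e, u⟫ = 0 := by
    apply ortho_of_min
    intro t
    have := hmin b (c + t)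
    convert this using 2
    rw [he]
    module
  have hxx : ⟪x, x⟫ = 1 := by
    rw [real_inner_self_eq_norm_sq, hx]; norm_num
  have huu : ⟪u, u⟫ = 1 := by
    rw [real_inner_self_eq_norm_sq, hu]; norm_num
  have hyx := real_inner_comm y x
  have hux := real_inner_comm u x
  have hyu := real_inner_comm y u
  have e1 : ⟪x, y⟫ - b - c * ⟪x, u⟫ = 0 := by
    have h0 : ⟪e, x⟫ = ⟪y, x⟫ - (b * ⟪x, x⟫ + c * ⟪u, x⟫) := by
      rw [he, inner_sub_left, inner_add_left, real_inner_smul_left, real_inner_smul_left]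
    rw [hex, hxx] at h0
    linear_combination -h0 + hyx - c * hux
  have e2 : ⟪y, u⟫ - b * ⟪x, u⟫ - c = 0 := by
    have h0 : ⟪e, u⟫ = ⟪y, u⟫ - (b * ⟪x, u⟫ + c * ⟪u, u⟫) := by
      rw [he, inner_sub_left, inner_add_left, real_inner_smul_left, real_inner_smul_left]
    rw [heu, huu] at h0
    linarith
  have hne : x - ⟪x, u⟫ • u ≠ 0 := by
    rw [linearIndependent_fin2] at hli
    intro h
    exact hli.2 ⟪x, u⟫ (by rw [sub_eq_zero] at h; exact h.symm)
  have hpos : 0 < 1 - ⟪x, u⟫ ^ 2 := by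
    have hnp := norm_pos_iff.mpr hne
    have h0 : (0:ℝ) < ‖x - ⟪x, u⟫ • u‖ ^ 2 := by positivity
    have h1 : ‖x - ⟪x, u⟫ • u‖ ^ 2 = 1 - ⟪x, u⟫ ^ 2 := by
      rw [norm_sub_sq_real, real_inner_smul_right, norm_smul, hx, hu]
      simp only [Real.norm_eq_abs]
      rw [mul_pow, sq_abs]
      ring
    linarith [h1 ▸ h0]
  have key : b * (1 - ⟪x, u⟫ ^ 2) = ⟪x, y⟫ - ⟪x, u⟫ * ⟪y, u⟫ := by
    linear_combination (-1) * e1 + ⟪x, u⟫ * e2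
  constructor
  · intro hb
    nlinarith
  · intro hgt
    nlinarith
end

section
/- Consider data with two groups (x_i ∈ {0,1}) partitioned into k+1 categories. Suppose within every category j, the difference of within-category means ȳ(j,1) − ȳ(j,0) is strictly positive. Then the least-squares coefficient β̂_x of x in the regression of y onto x, an intercept, and category indicator variables is strictly positive. -/
open Finset

/-- Quadratic nonnegativity forces the linear coefficient to vanish. -/
lemma quad_coeff_zero {A B : ℝ} (hA : 0 ≤ A) (h : ∀ t : ℝ, 0 ≤ A * t ^ 2 + B * t) :
    B = 0 := by
  by_contra hB
  have h1 : (0:ℝ) < A + 1 := by linarith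
  have ht := h (-B / (A + 1))
  have heq : A * (-B / (A + 1)) ^ 2 + B * (-B / (A + 1)) =
      -(B ^ 2 * (1 / (A + 1) ^ 2)) := by
    field_simp
    ring
  rw [heq] at ht
  have h2 : 0 < B ^ 2 * (1 / (A + 1) ^ 2) := by positivity
  linarith

/-- Data in two groups (`x a ∈ {0,1}`) partitioned into `k+1` categories.
If every group-by-category cell is nonempty and within every category `j` the difference
of within-category means `ȳ(j,1) − ȳ(j,0)` is strictly positive, then the least-squares
coefficient `bx` of `x` in the regression of `y` onto `x`, an intercept, and category
indicators `u₁,…,u_k` is strictly positive. -/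
theorem stmt11 (N k : ℕ) (x y : Fin N → ℝ) (c : Fin N → Fin (k + 1))
    (hx01 : ∀ a, x a = 0 ∨ x a = 1)
    (hne1 : ∀ j : Fin (k + 1), (univ.filter (fun a => c a = j ∧ x a = 1)).Nonempty)
    (hne0 : ∀ j : Fin (k + 1), (univ.filter (fun a => c a = j ∧ x a = 0)).Nonempty)
    (hpos : ∀ j : Fin (k + 1),
      (∑ a ∈ univ.filter (fun a => c a = j ∧ x a = 1), y a) /
          ((univ.filter (fun a => c a = j ∧ x a = 1)).card : ℝ) >
        (∑ a ∈ univ.filter (fun a => c a = j ∧ x a = 0), y a) /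
          ((univ.filter (fun a => c a = j ∧ x a = 0)).card : ℝ))
    (bx b0 : ℝ) (bc : Fin k → ℝ)
    (hmin : ∀ (bx' b0' : ℝ) (bc' : Fin k → ℝ),
      ∑ a, (y a - (bx * x a + b0 + ∑ j, bc j * (if c a = j.succ then 1 else 0))) ^ 2 ≤
        ∑ a, (y a - (bx' * x a + b0' + ∑ j, bc' j * (if c a = j.succ then 1 else 0))) ^ 2) :
    0 < bx := by
  classical
  set r : Fin N → ℝ :=
    fun a => y a - (bx * x a + b0 + ∑ j, bc j * (if c a = j.succ then 1 else 0)) with hr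
  -- orthogonality of residuals to the column space
  have ortho : ∀ (dx d0 : ℝ) (dc : Fin k → ℝ),
      ∑ a, r a * (dx * x a + d0 + ∑ j, dc j * (if c a = j.succ then 1 else 0)) = 0 := by
    intro dx d0 dc
    set d : Fin N → ℝ :=
      fun a => dx * x a + d0 + ∑ j, dc j * (if c a = j.succ then 1 else 0) with hd
    have key : ∀ t : ℝ, 0 ≤ (∑ a, d a ^ 2) * t ^ 2 + (-2 * ∑ a, r a * d a) * t := by
      intro t
      have h := hmin (bx + t * dx) (b0 + t * d0) (fun j => bc j + t * dc j)
      have expand : ∀ a, y a - ((bx + t * dx) * x a + (b0 + t * d0) +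
          ∑ j, (bc j + t * dc j) * (if c a = j.succ then 1 else 0)) = r a - t * d a := by
        intro a
        have hsplit : ∑ j, (bc j + t * dc j) * (if c a = j.succ then 1 else 0) =
            (∑ j, bc j * (if c a = j.succ then 1 else 0)) +
              t * ∑ j, dc j * (if c a = j.succ then 1 else 0) := by
          rw [Finset.mul_sum, ← Finset.sum_add_distrib]
          exact Finset.sum_congr rfl (fun j _ => by ring)
        simp only [hr, hd]
        rw [hsplit]
        ring
      have hsum : ∑ a, (y a - ((bx + t * dx) * x a + (b0 + t * d0) +
          ∑ j, (bc j + t * dc j) * (if c a = j.succ then 1 else 0))) ^ 2 =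
          ∑ a, ((r a) ^ 2 - 2 * t * (r a * d a) + t ^ 2 * (d a) ^ 2) := by
        refine Finset.sum_congr rfl (fun a _ => ?_)
        rw [expand a]; ring
      rw [hsum] at h
      rw [Finset.sum_add_distrib, Finset.sum_sub_distrib, ← Finset.mul_sum,
        ← Finset.mul_sum] at h
      have h0 : ∑ a, r a ^ 2 = ∑ a, r a ^ 2 := rfl
      nlinarith [h]
    have hA : 0 ≤ ∑ a, d a ^ 2 := Finset.sum_nonneg fun a _ => sq_nonneg _
    have := quad_coeff_zero hA key
    linarith
  -- category constants
  set γ : Fin (k + 1) → ℝ :=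
    fun j => b0 + ∑ i, bc i * (if j = i.succ then 1 else 0) with hγ
  have hrγ : ∀ a, r a = y a - (bx * x a + γ (c a)) := by
    intro a
    simp only [hr, hγ]
    ring
  -- cell sums of residuals
  have hcell1 : ∀ j : Fin (k + 1),
      ∑ a ∈ univ.filter (fun a => c a = j ∧ x a = 1), r a =
        (∑ a ∈ univ.filter (fun a => c a = j ∧ x a = 1), y a) -
          ((univ.filter (fun a => c a = j ∧ x a = 1)).card : ℝ) * (bx + γ j) := by
    intro j
    have : ∀ a ∈ univ.filter (fun a => c a = j ∧ x a = 1),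
        r a = y a - (bx + γ j) := by
      intro a ha
      simp only [mem_filter] at ha
      rw [hrγ a, ha.2.1, ha.2.2]; ring
    rw [Finset.sum_congr rfl this, Finset.sum_sub_distrib, Finset.sum_const,
      nsmul_eq_mul]
  have hcell0 : ∀ j : Fin (k + 1),
      ∑ a ∈ univ.filter (fun a => c a = j ∧ x a = 0), r a =
        (∑ a ∈ univ.filter (fun a => c a = j ∧ x a = 0), y a) -
          ((univ.filter (fun a => c a = j ∧ x a = 0)).card : ℝ) * γ j := by
    intro j
    have : ∀ a ∈ univ.filter (fun a => c a = j ∧ x a = 0),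
        r a = y a - γ j := by
      intro a ha
      simp only [mem_filter] at ha
      rw [hrγ a, ha.2.1, ha.2.2]; ring
    rw [Finset.sum_congr rfl this, Finset.sum_sub_distrib, Finset.sum_const,
      nsmul_eq_mul]
  -- residual sums over categories vanish
  have htot : ∑ a, r a = 0 := by
    have h := ortho 0 1 0
    simpa using h
  have hsucc : ∀ i : Fin k, ∑ a ∈ univ.filter (fun a => c a = i.succ), r a = 0 := by
    intro i
    have h := ortho 0 0 (fun jj => if jj = i then (1:ℝ) else 0)
    have hd : ∀ a, (0 : ℝ) * x a + 0 + ∑ j, (if j = i then (1:ℝ) else 0) *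
        (if c a = j.succ then (1:ℝ) else 0) = if c a = i.succ then 1 else 0 := by
      intro a
      rw [Finset.sum_eq_single i]
      · simp
      · intro b _ hb; simp [hb]
      · simp
    rw [Finset.sum_congr rfl (fun a _ => by rw [hd a])] at h
    rw [Finset.sum_filter]
    have hpt : ∀ a : Fin N, (if c a = i.succ then r a else 0) =
        r a * (if c a = i.succ then 1 else 0) := by
      intro a; by_cases hc : c a = i.succ <;> simp [hc]
    rw [Finset.sum_congr rfl (fun a _ => hpt a)]
    exact h
  have hfiber : ∑ j : Fin (k + 1), ∑ a ∈ univ.filter (fun a => c a = j), r a =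
      ∑ a, r a := Finset.sum_fiberwise univ c r
  have hcat : ∀ j : Fin (k + 1), ∑ a ∈ univ.filter (fun a => c a = j), r a = 0 := by
    intro j
    induction j using Fin.cases with
    | zero =>
      have h := hfiber
      rw [htot, Fin.sum_univ_succ] at h
      have hz : ∑ i : Fin k, ∑ a ∈ univ.filter (fun a => c a = i.succ), r a = 0 :=
        Finset.sum_eq_zero fun i _ => hsucc i
      rw [hz] at h
      linarith
    | succ i => exact hsucc i
  -- split each category into two cells
  have hsplitcat : ∀ j : Fin (k + 1),
      (∑ a ∈ univ.filter (fun a => c a = j ∧ x a = 1), r a) +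
        (∑ a ∈ univ.filter (fun a => c a = j ∧ x a = 0), r a) = 0 := by
    intro j
    have h1 : univ.filter (fun a => c a = j ∧ x a = 1) =
        (univ.filter (fun a => c a = j)).filter (fun a => x a = 1) := by
      rw [Finset.filter_filter]
    have h0 : univ.filter (fun a => c a = j ∧ x a = 0) =
        (univ.filter (fun a => c a = j)).filter (fun a => ¬ x a = 1) := by
      rw [Finset.filter_filter]
      refine Finset.filter_congr fun a _ => ?_
      constructor
      · rintro ⟨hc, hx⟩; exact ⟨hc, by rw [hx]; norm_num⟩
      · rintro ⟨hc, hx⟩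
        refine ⟨hc, ?_⟩
        rcases hx01 a with h | h
        · exact h
        · exact absurd h hx
    rw [h1, h0, Finset.sum_filter_add_sum_filter_not]
    exact hcat j
  -- sum over x=1 cells vanishes
  have hxsum : ∑ j : Fin (k + 1), ∑ a ∈ univ.filter (fun a => c a = j ∧ x a = 1), r a
      = 0 := by
    have h := ortho 1 0 0
    simp only [one_mul, add_zero, Pi.zero_apply, zero_mul, Finset.sum_const_zero] at h
    have hx1 : ∑ a, r a * x a = ∑ a ∈ univ.filter (fun a => x a = 1), r a := by
      rw [Finset.sum_filter]
      refine Finset.sum_congr rfl fun a _ => ?_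
      rcases hx01 a with h' | h' <;> simp [h']
    have hfib : ∑ j : Fin (k + 1),
        ∑ a ∈ (univ.filter (fun a => x a = 1)).filter (fun a => c a = j), r a =
        ∑ a ∈ univ.filter (fun a => x a = 1), r a :=
      Finset.sum_fiberwise _ c r
    have hcells : ∀ j : Fin (k + 1),
        (univ.filter (fun a => x a = 1)).filter (fun a => c a = j) =
          univ.filter (fun a => c a = j ∧ x a = 1) := by
      intro j
      rw [Finset.filter_filter]
      exact Finset.filter_congr fun a _ => by tauto
    calc ∑ j : Fin (k + 1), ∑ a ∈ univ.filter (fun a => c a = j ∧ x a = 1), r a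
        = ∑ j : Fin (k + 1),
            ∑ a ∈ (univ.filter (fun a => x a = 1)).filter (fun a => c a = j), r a :=
          Finset.sum_congr rfl fun j _ => by rw [hcells j]
      _ = ∑ a ∈ univ.filter (fun a => x a = 1), r a := hfib
      _ = ∑ a, r a * x a := hx1.symm
      _ = 0 := h
  -- each x=1 cell residual sum is positive if bx ≤ 0
  by_contra hbx
  push_neg at hbx
  have hPpos : ∀ j : Fin (k + 1),
      0 < ∑ a ∈ univ.filter (fun a => c a = j ∧ x a = 1), r a := by
    intro j
    set n1 : ℝ := ((univ.filter (fun a => c a = j ∧ x a = 1)).card : ℝ) with hn1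
    set n0 : ℝ := ((univ.filter (fun a => c a = j ∧ x a = 0)).card : ℝ) with hn0
    set S1 : ℝ := ∑ a ∈ univ.filter (fun a => c a = j ∧ x a = 1), y a with hS1
    set S0 : ℝ := ∑ a ∈ univ.filter (fun a => c a = j ∧ x a = 0), y a with hS0
    have hn1pos : 0 < n1 := by
      rw [hn1]; exact_mod_cast Finset.card_pos.mpr (hne1 j)
    have hn0pos : 0 < n0 := by
      rw [hn0]; exact_mod_cast Finset.card_pos.mpr (hne0 j)
    have hmean : S0 / n0 < S1 / n1 := hpos j
    have hcross : S0 * n1 < S1 * n0 := by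
      rwa [div_lt_div_iff₀ hn0pos hn1pos] at hmean
    have e1 := hcell1 j
    have e0 := hcell0 j
    have esum := hsplitcat j
    set P : ℝ := ∑ a ∈ univ.filter (fun a => c a = j ∧ x a = 1), r a with hP
    set Q : ℝ := ∑ a ∈ univ.filter (fun a => c a = j ∧ x a = 0), r a with hQ
    have hkey : (n0 + n1) * P = n0 * S1 - n1 * S0 - n0 * n1 * bx := by
      have : P + Q = 0 := esum
      nlinarith [e1, e0, this]
    nlinarith [mul_pos hn0pos hn1pos]
  have : 0 < ∑ j : Fin (k + 1),
      ∑ a ∈ univ.filter (fun a => c a = j ∧ x a = 1), r a :=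
    Finset.sum_pos (fun j _ => hPpos j) Finset.univ_nonempty
  rw [hxsum] at this
  exact lt_irrefl 0 this
end

section
/- Let x, y be unit vectors in R^n, let U ⊆ U' be nested subspaces with orthogonal projections P, P'. If ‖P'x‖·‖P'y‖ < |⟨x,y⟩| then ‖Px‖·‖Py‖ < |⟨x,y⟩|; consequently, if the product of the coefficients of determination for the full covariate set is below |r|, then no subset of covariates can induce a reversal. -/
open RealInnerProductSpace

/-- For unit vectors `x, y` and nested subspaces `U ⊆ U'` with orthogonal
projections `P, P'`: if `‖P'x‖·‖P'y‖ < |⟪x,y⟫|` then `‖Px‖·‖Py‖ < |⟪x,y⟫|`.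
(Consequently, if the product of coefficients of determination for the full covariate
set is below `|r|`, no subset of covariates can induce a reversal.) -/
theorem stmt13 (n : ℕ) (x y : EuclideanSpace ℝ (Fin n))
    (hx : ‖x‖ = 1) (hy : ‖y‖ = 1)
    (U U' : Submodule ℝ (EuclideanSpace ℝ (Fin n))) (hUU' : U ≤ U')
    (h : ‖(U'.orthogonalProjectionOnto x : EuclideanSpace ℝ (Fin n))‖ *
        ‖(U'.orthogonalProjectionOnto y : EuclideanSpace ℝ (Fin n))‖ < |⟪x, y⟫|) :
    ‖(U.orthogonalProjectionOnto x : EuclideanSpace ℝ (Fin n))‖ *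
      ‖(U.orthogonalProjectionOnto y : EuclideanSpace ℝ (Fin n))‖ < |⟪x, y⟫| := by
  have key : ∀ z : EuclideanSpace ℝ (Fin n),
      ‖(U.orthogonalProjectionOnto z : EuclideanSpace ℝ (Fin n))‖ ≤
      ‖(U'.orthogonalProjectionOnto z : EuclideanSpace ℝ (Fin n))‖ := by
    intro z
    rw [← Submodule.orthogonalProjectionOnto_starProjection_of_le hUU' z, Submodule.starProjection_apply]
    have h1 := (U.orthogonalProjectionOnto).le_opNorm
      ((U'.orthogonalProjectionOnto z : EuclideanSpace ℝ (Fin n)))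
    have h2 := Submodule.orthogonalProjectionOnto_norm_le U
    have h3 : (0:ℝ) ≤ ‖(U'.orthogonalProjectionOnto z : EuclideanSpace ℝ (Fin n))‖ := norm_nonneg _
    simp only [Submodule.norm_coe] at *
    nlinarith
  exact lt_of_le_of_lt (mul_le_mul (key x) (key y) (norm_nonneg _) (norm_nonneg _)) h
end

section
/- Let x, y be unit vectors with r := ⟨x,y⟩ > 0 and v = x+y. Let U ⊆ U' be nested subspaces with projections P, P'. If ‖P'v‖² < (2r/(1+r))·‖v‖², then ⟨x,y⟩ − ⟨Px,Py⟩ > 0 for the projection P onto any subspace U of U'. -/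
open RealInnerProductSpace

/-- For unit vectors `x, y` with `r := ⟪x,y⟫ > 0` and `v = x + y`, and
nested subspaces `U ⊆ U'` with projections `P, P'`: if `‖P'v‖² < (2r/(1+r))·‖v‖²`,
then `⟪x,y⟫ − ⟪Px, Py⟫ > 0`. -/
theorem stmt14 (n : ℕ) (x y : EuclideanSpace ℝ (Fin n))
    (hx : ‖x‖ = 1) (hy : ‖y‖ = 1) (hr : 0 < ⟪x, y⟫)
    (U U' : Submodule ℝ (EuclideanSpace ℝ (Fin n))) (hUU' : U ≤ U')
    (h : ‖(U'.orthogonalProjection (x + y) : EuclideanSpace ℝ (Fin n))‖ ^ 2 <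
        (2 * ⟪x, y⟫ / (1 + ⟪x, y⟫)) * ‖x + y‖ ^ 2) :
    0 < ⟪x, y⟫ - ⟪(U.orthogonalProjection x : EuclideanSpace ℝ (Fin n)),
      (U.orthogonalProjection y : EuclideanSpace ℝ (Fin n))⟫ := by
  set r := ⟪x, y⟫ with hrdef
  -- ‖x+y‖² = 2 + 2r
  have hv : ‖x + y‖ ^ 2 = 2 + 2 * r := by
    rw [← real_inner_self_eq_norm_sq, real_inner_add_add_self,
      real_inner_self_eq_norm_sq, real_inner_self_eq_norm_sq, hx, hy]
    ring
  -- RHS equals 4r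
  have hRHS : (2 * r / (1 + r)) * ‖x + y‖ ^ 2 = 4 * r := by
    rw [hv]
    field_simp
    ring
  -- monotonicity: ‖P(x+y)‖ ≤ ‖P'(x+y)‖
  have hmono : ‖(U.orthogonalProjection (x + y) : EuclideanSpace ℝ (Fin n))‖ ≤
      ‖(U'.orthogonalProjection (x + y) : EuclideanSpace ℝ (Fin n))‖ := by
    rw [← Submodule.orthogonalProjectionOnto_starProjection_of_le hUU' (x + y), Submodule.starProjection_apply]
    calc ‖(U.orthogonalProjection ((U'.orthogonalProjection (x + y) : EuclideanSpace ℝ (Fin n))) : EuclideanSpace ℝ (Fin n))‖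
        ≤ 1 * ‖(U'.orthogonalProjection (x + y) : EuclideanSpace ℝ (Fin n))‖ :=
          ContinuousLinearMap.le_of_opNorm_le _ (Submodule.orthogonalProjectionOnto_norm_le U) _
      _ = _ := one_mul _
  have hPv : ‖(U.orthogonalProjection (x + y) : EuclideanSpace ℝ (Fin n))‖ ^ 2 < 4 * r := by
    calc ‖(U.orthogonalProjection (x + y) : EuclideanSpace ℝ (Fin n))‖ ^ 2
        ≤ ‖(U'.orthogonalProjection (x + y) : EuclideanSpace ℝ (Fin n))‖ ^ 2 := by
          exact pow_le_pow_left₀ (norm_nonneg _) hmono 2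
      _ < 4 * r := by rw [← hRHS]; exact h
  set Px := (U.orthogonalProjection x : EuclideanSpace ℝ (Fin n)) with hPx
  set Py := (U.orthogonalProjection y : EuclideanSpace ℝ (Fin n)) with hPy
  have hadd : Px + Py = (U.orthogonalProjection (x + y) : EuclideanSpace ℝ (Fin n)) := by
    rw [hPx, hPy, map_add]; rfl
  -- polarization
  have hpol : ⟪Px, Py⟫ = (‖Px + Py‖ ^ 2 - ‖Px - Py‖ ^ 2) / 4 := by
    rw [← real_inner_self_eq_norm_sq, ← real_inner_self_eq_norm_sq,
      real_inner_add_add_self, real_inner_sub_sub_self]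
    ring
  have hle : ⟪Px, Py⟫ ≤ ‖Px + Py‖ ^ 2 / 4 := by
    rw [hpol]
    have : 0 ≤ ‖Px - Py‖ ^ 2 := sq_nonneg _
    linarith
  have : ⟪Px, Py⟫ < r := by
    rw [hadd] at hle
    linarith
  linarith
end

section
/- Let x, y, u be unit vectors in R^n with {x, u} linearly independent and ⟨x,y⟩ > 0. Then the least-squares coefficient of x in the regression of y onto {x, u} is negative if and only if the unit vector u (or −u) lies in the open cone C = {w ≠ 0 : ⟨x,w⟩⟨y,w⟩ > ⟨x,y⟩·‖w‖²}; moreover C is symmetric under w ↦ −w and is invariant under positive scaling. -/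
open RealInnerProductSpace

private lemma ortho_aux {n : ℕ} (r v : EuclideanSpace ℝ (Fin n)) (hv : ‖v‖ = 1)
    (h : ∀ t : ℝ, ‖r‖ ≤ ‖r - t • v‖) : ⟪r, v⟫ = 0 := by
  by_contra hne
  have hle := h ⟪r, v⟫
  have h2 : ‖r - ⟪r, v⟫ • v‖ ^ 2 = ‖r‖ ^ 2 - ⟪r, v⟫ ^ 2 := by
    rw [norm_sub_sq_real, real_inner_smul_right, norm_smul, Real.norm_eq_abs, hv,
      mul_one, sq_abs]
    ring
  have h3 : (0:ℝ) < ⟪r, v⟫ ^ 2 := by positivity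
  nlinarith [pow_le_pow_left₀ (norm_nonneg r) hle 2]

/-- For unit vectors `x, y, u` with `{x, u}` linearly independent and
`⟪x,y⟫ > 0`, the least-squares coefficient of `x` in the regression of `y` onto
`{x, u}` is negative iff `u` lies in the open reversal cone
`C = {w ≠ 0 : ⟪x,w⟫⟪y,w⟫ > ⟪x,y⟫‖w‖²}`; moreover `C` is symmetric under `w ↦ −w`
and invariant under positive scaling. -/
theorem stmt17 (n : ℕ) (x y u : EuclideanSpace ℝ (Fin n))
    (hx : ‖x‖ = 1) (hy : ‖y‖ = 1) (hu : ‖u‖ = 1)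
    (hli : LinearIndependent ℝ ![x, u]) (hr : 0 < ⟪x, y⟫)
    (b c : ℝ)
    (hmin : ∀ b' c' : ℝ, ‖y - (b • x + c • u)‖ ≤ ‖y - (b' • x + c' • u)‖) :
    (b < 0 ↔ u ∈ {w : EuclideanSpace ℝ (Fin n) |
        w ≠ 0 ∧ ⟪x, w⟫ * ⟪y, w⟫ > ⟪x, y⟫ * ‖w‖ ^ 2}) ∧
    (∀ w : EuclideanSpace ℝ (Fin n),
      w ∈ {w : EuclideanSpace ℝ (Fin n) |
          w ≠ 0 ∧ ⟪x, w⟫ * ⟪y, w⟫ > ⟪x, y⟫ * ‖w‖ ^ 2} ↔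
        -w ∈ {w : EuclideanSpace ℝ (Fin n) |
          w ≠ 0 ∧ ⟪x, w⟫ * ⟪y, w⟫ > ⟪x, y⟫ * ‖w‖ ^ 2}) ∧
    (∀ (t : ℝ), 0 < t → ∀ w : EuclideanSpace ℝ (Fin n),
      w ∈ {w : EuclideanSpace ℝ (Fin n) |
          w ≠ 0 ∧ ⟪x, w⟫ * ⟪y, w⟫ > ⟪x, y⟫ * ‖w‖ ^ 2} →
        t • w ∈ {w : EuclideanSpace ℝ (Fin n) |
          w ≠ 0 ∧ ⟪x, w⟫ * ⟪y, w⟫ > ⟪x, y⟫ * ‖w‖ ^ 2}) := by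
  set r := y - (b • x + c • u) with hrdef
  have hrx : ⟪r, x⟫ = 0 := by
    apply ortho_aux r x hx
    intro t
    have := hmin (b + t) c
    convert this using 2
    simp only [hrdef, add_smul]
    module
  have hru : ⟪r, u⟫ = 0 := by
    apply ortho_aux r u hu
    intro t
    have := hmin b (c + t)
    convert this using 2
    simp only [hrdef, add_smul]
    module
  -- inner product notation
  have hxx : ⟪x, x⟫ = 1 := by
    rw [real_inner_self_eq_norm_sq, hx]; norm_num
  have huu : ⟪u, u⟫ = 1 := by
    rw [real_inner_self_eq_norm_sq, hu]; norm_num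
  -- normal equations
  have e1 : ⟪x, y⟫ = b + c * ⟪x, u⟫ := by
    have : ⟪y - (b • x + c • u), x⟫ = 0 := hrx
    rw [inner_sub_left, inner_add_left, real_inner_smul_left, real_inner_smul_left] at this
    rw [real_inner_comm x y, hxx, real_inner_comm x u] at this
    linarith
  have e2 : ⟪u, y⟫ = b * ⟪x, u⟫ + c := by
    have : ⟪y - (b • x + c • u), u⟫ = 0 := hru
    rw [inner_sub_left, inner_add_left, real_inner_smul_left, real_inner_smul_left] at this
    rw [real_inner_comm u y, huu] at this
    linarith
  -- strict Cauchy–Schwarz from linear independence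
  have hfin := linearIndependent_fin2.mp hli
  simp only [Matrix.cons_val_one, Matrix.head_cons, Matrix.cons_val_zero] at hfin
  have hxu2 : ⟪x, u⟫ ^ 2 < 1 := by
    have h1 : ⟪x, u⟫ < 1 := by
      have hne : ‖u‖ • x ≠ ‖x‖ • u := by
        rw [hx, hu, one_smul, one_smul]
        intro h
        exact hfin.2 1 (by rw [one_smul, h])
      have := inner_lt_norm_mul_iff_real.mpr hne
      rwa [hx, hu, one_mul] at this
    have h2 : -⟪x, u⟫ < 1 := by
      have hne : ‖u‖ • x ≠ ‖(-x : EuclideanSpace ℝ (Fin n))‖ • u → True := fun _ => trivial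
      have hne2 : ‖u‖ • (-x : EuclideanSpace ℝ (Fin n)) ≠ ‖(-x : EuclideanSpace ℝ (Fin n))‖ • u := by
        rw [norm_neg, hx, hu, one_smul, one_smul]
        intro h
        exact hfin.2 (-1) (by rw [neg_smul, one_smul, ← h, neg_neg])
      have := inner_lt_norm_mul_iff_real.mpr hne2
      rw [norm_neg, hx, hu, one_mul, inner_neg_left] at this
      linarith
    nlinarith
  have hb : b * (1 - ⟪x, u⟫ ^ 2) = ⟪x, y⟫ - ⟪x, u⟫ * ⟪u, y⟫ := by
    linear_combination ⟪x, u⟫ * e2 - e1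
  have hdenom : 0 < 1 - ⟪x, u⟫ ^ 2 := by linarith
  refine ⟨?_, ?_, ?_⟩
  · constructor
    · intro hb0
      refine ⟨by intro h; rw [h] at hu; simp at hu, ?_⟩
      have : ⟪x, y⟫ - ⟪x, u⟫ * ⟪u, y⟫ < 0 := by
        rw [← hb]; exact mul_neg_of_neg_of_pos hb0 hdenom
      rw [hu]
      rw [real_inner_comm y u] at this
      linarith
    · rintro ⟨-, hcone⟩
      rw [hu] at hcone
      have h1 : ⟪x, y⟫ - ⟪x, u⟫ * ⟪u, y⟫ < 0 := by
        rw [real_inner_comm y u]; linarith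
      nlinarith [hb, hdenom]
  · intro w
    simp only [Set.mem_setOf_eq, inner_neg_right, norm_neg, neg_ne_zero, neg_mul_neg]
  · intro t ht w ⟨hw0, hw⟩
    refine ⟨smul_ne_zero (ne_of_gt ht) hw0, ?_⟩
    simp only [Set.mem_setOf_eq, inner_smul_right, norm_smul, Real.norm_eq_abs,
      abs_of_pos ht]
    calc ⟪x, y⟫ * (t * ‖w‖) ^ 2 = t ^ 2 * (⟪x, y⟫ * ‖w‖ ^ 2) := by ring
    _ < t ^ 2 * (⟪x, w⟫ * ⟪y, w⟫) := by
        apply mul_lt_mul_of_pos_left hw (by positivity)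
    _ = t * ⟪x, w⟫ * (t * ⟪y, w⟫) := by ring
end

section
/- Let x, y be unit vectors in R^n with r := ⟨x,y⟩ ∈ (0,1). For every unit vector w in the reversal cone (i.e., ⟨x,w⟩⟨y,w⟩ > r), we have ⟨w, x + y⟩² > 4r; equivalently, the squared correlation of w with v = x + y exceeds 2r/(1+r). -/
open RealInnerProductSpace

/-- For unit vectors `x, y` with `r := ⟪x,y⟫ ∈ (0,1)` and any unit vector
`w` in the reversal cone (`⟪x,w⟫·⟪y,w⟫ > r`), we have `⟪w, x+y⟫² > 4r`; equivalently,
the squared correlation of `w` with `v = x + y` exceeds `2r/(1+r)`. -/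
theorem stmt18 (n : ℕ) (x y w : EuclideanSpace ℝ (Fin n))
    (hx : ‖x‖ = 1) (hy : ‖y‖ = 1) (hw : ‖w‖ = 1)
    (hr0 : 0 < ⟪x, y⟫) (hr1 : ⟪x, y⟫ < 1)
    (hcone : ⟪x, w⟫ * ⟪y, w⟫ > ⟪x, y⟫) :
    ⟪w, x + y⟫ ^ 2 > 4 * ⟪x, y⟫ ∧
    ⟪w, x + y⟫ ^ 2 / ‖x + y‖ ^ 2 > 2 * ⟪x, y⟫ / (1 + ⟪x, y⟫) := by
  have hwx : ⟪w, x⟫ = ⟪x, w⟫ := real_inner_comm _ _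
  have hwy : ⟪w, y⟫ = ⟪y, w⟫ := real_inner_comm _ _
  have hexp : ⟪w, x + y⟫ = ⟪x, w⟫ + ⟪y, w⟫ := by
    rw [inner_add_right, hwx, hwy]
  have hsq : (⟪x, w⟫ + ⟪y, w⟫) ^ 2 ≥ 4 * (⟪x, w⟫ * ⟪y, w⟫) := by nlinarith [sq_nonneg (⟪x, w⟫ - ⟪y, w⟫)]
  have h1 : ⟪w, x + y⟫ ^ 2 > 4 * ⟪x, y⟫ := by
    rw [hexp]; nlinarith
  refine ⟨h1, ?_⟩
  have hnorm : ‖x + y‖ ^ 2 = 2 + 2 * ⟪x, y⟫ := by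
    rw [norm_add_sq_real, hx, hy]; ring
  rw [hnorm, gt_iff_lt, div_lt_div_iff₀ (by linarith) (by linarith)]
  nlinarith
end

section
/- There exist vectors y, x, u₁, u₂ in R⁴ such that for all sufficiently small ε > 0: the correlations r(u₁,x), r(u₁,y), r(u₂,x), r(u₂,y) all tend to 0 as ε → 0, yet the least-squares coefficient of x when y is regressed onto {x, u₁, u₂} (with intercept) equals −1 while the simple regression coefficient of y on x is positive (approximately 0.5). -/
open Filter

/-- Sample (Pearson) correlation of two data vectors of length 4. -/
noncomputable def sampleCorr (a b : Fin 4 → ℝ) : ℝ :=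
  (∑ i, (a i - (∑ j, a j) / 4) * (b i - (∑ j, b j) / 4)) /
    (Real.sqrt (∑ i, (a i - (∑ j, a j) / 4) ^ 2) *
      Real.sqrt (∑ i, (b i - (∑ j, b j) / 4) ^ 2))

set_option maxHeartbeats 4000000 in
/-- There exist data vectors `y, x, u₁, u₂` in `ℝ⁴` (with `u₁, u₂`
depending on a parameter `ε`) such that all four correlations `r(u_i, x)`, `r(u_i, y)`
tend to `0` as `ε → 0⁺`, the simple least-squares regression coefficient of `y` on `x`
(with intercept) is positive, and yet for all sufficiently small `ε > 0` the
least-squares coefficient of `x` when `y` is regressed onto `{x, u₁, u₂}` (with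
intercept) equals `−1`. -/
theorem stmt19 :
    ∃ (Y X : Fin 4 → ℝ) (U : ℝ → Fin 2 → Fin 4 → ℝ),
      (∀ i : Fin 2,
        Tendsto (fun ε => sampleCorr (U ε i) X) (nhdsWithin 0 (Set.Ioi 0)) (nhds 0)) ∧
      (∀ i : Fin 2,
        Tendsto (fun ε => sampleCorr (U ε i) Y) (nhdsWithin 0 (Set.Ioi 0)) (nhds 0)) ∧
      (∀ b b0 : ℝ,
        (∀ b' b0' : ℝ, ∑ a, (Y a - (b * X a + b0)) ^ 2 ≤ ∑ a, (Y a - (b' * X a + b0')) ^ 2) →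
          0 < b) ∧
      (∃ ε₀ > (0 : ℝ), ∀ ε : ℝ, 0 < ε → ε < ε₀ →
        ∀ b b0 c1 c2 : ℝ,
          (∀ b' b0' c1' c2' : ℝ,
            ∑ a, (Y a - (b * X a + b0 + c1 * U ε 0 a + c2 * U ε 1 a)) ^ 2 ≤
              ∑ a, (Y a - (b' * X a + b0' + c1' * U ε 0 a + c2' * U ε 1 a)) ^ 2) →
          b = -1) := by
  have hs2 : (Real.sqrt 2) ^ 2 = 2 := Real.sq_sqrt (by norm_num)
  set s := Real.sqrt 2 with hsdef
  have hs0 : 0 ≤ s := Real.sqrt_nonneg 2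
  have hs1 : 1 < s := by nlinarith
  have hs32 : s < 3/2 := by nlinarith
  refine ⟨![(s+3)/2, (s-3)/2, -1/2, -1/2],
          ![(3-s)/2, (-3-s)/2, 1/2, 1/2],
          fun ε => ![![ε*s/2, -(ε*s/2), 1, -1], ![ε*s/2, -(ε*s/2), -1, 1]],
          ?_, ?_, ?_, ?_⟩
  -- the common limit argument
  · intro i
    have key : Tendsto (fun ε : ℝ => (3*s*ε/2) / (Real.sqrt (ε^2+2) * Real.sqrt ((21+2*s)/4)))
        (nhds 0) (nhds 0) := by
      have h1 : Tendsto (fun ε : ℝ => 3*s*ε/2) (nhds 0) (nhds 0) := by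
        have : Continuous (fun ε : ℝ => 3*s*ε/2) := by continuity
        simpa using this.tendsto 0
      have h2 : Tendsto (fun ε : ℝ => Real.sqrt (ε^2+2) * Real.sqrt ((21+2*s)/4))
          (nhds 0) (nhds (Real.sqrt ((0:ℝ)^2+2) * Real.sqrt ((21+2*s)/4))) := by
        have : Continuous (fun ε : ℝ => Real.sqrt (ε^2+2) * Real.sqrt ((21+2*s)/4)) := by
          continuity
        exact this.tendsto 0
      have hne : Real.sqrt ((0:ℝ)^2+2) * Real.sqrt ((21+2*s)/4) ≠ 0 := by
        have : (0:ℝ) < Real.sqrt ((0:ℝ)^2+2) * Real.sqrt ((21+2*s)/4) := by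
          apply mul_pos (Real.sqrt_pos.mpr (by norm_num)) (Real.sqrt_pos.mpr (by nlinarith))
        linarith
      have h3 := h1.div h2 hne
      rw [zero_div] at h3
      exact h3
    have heq : ∀ ε : ℝ, sampleCorr (![![ε*s/2, -(ε*s/2), 1, -1], ![ε*s/2, -(ε*s/2), -1, 1]] i)
        ![(3-s)/2, (-3-s)/2, 1/2, 1/2]
        = (3*s*ε/2) / (Real.sqrt (ε^2+2) * Real.sqrt ((21+2*s)/4)) := by
      intro ε
      have ex : ((3-s)/2 - ((3-s)/2 + (-3-s)/2 + 1/2 + 1/2)/4)^2 + ((-3-s)/2 - ((3-s)/2 + (-3-s)/2 + 1/2 + 1/2)/4)^2 + (1/2 - ((3-s)/2 + (-3-s)/2 + 1/2 + 1/2)/4)^2 + (1/2 - ((3-s)/2 + (-3-s)/2 + 1/2 + 1/2)/4)^2 = (21+2*s)/4 := by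
        linear_combination (1/4 : ℝ) * hs2
      fin_cases i
      · unfold sampleCorr
        simp only [Fin.sum_univ_four, Matrix.cons_val_zero, Matrix.cons_val_one, Matrix.head_cons,
          Matrix.cons_val_two, Matrix.tail_cons, Matrix.cons_val_three, Fin.isValue, Fin.zero_eta,
          Fin.mk_one]
        rw [show (ε*s/2 - (ε*s/2 + -(ε*s/2) + 1 + -1)/4)^2 + (-(ε*s/2) - (ε*s/2 + -(ε*s/2) + 1 + -1)/4)^2 + (1 - (ε*s/2 + -(ε*s/2) + 1 + -1)/4)^2 + (-1 - (ε*s/2 + -(ε*s/2) + 1 + -1)/4)^2 = ε^2+2 from by linear_combination (ε^2/2) * hs2, ex]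
        congr 1
        ring
      · unfold sampleCorr
        simp only [Fin.sum_univ_four, Matrix.cons_val_zero, Matrix.cons_val_one, Matrix.head_cons,
          Matrix.cons_val_two, Matrix.tail_cons, Matrix.cons_val_three, Fin.isValue, Fin.zero_eta,
          Fin.mk_one]
        rw [show (ε*s/2 - (ε*s/2 + -(ε*s/2) + -1 + 1)/4)^2 + (-(ε*s/2) - (ε*s/2 + -(ε*s/2) + -1 + 1)/4)^2 + (-1 - (ε*s/2 + -(ε*s/2) + -1 + 1)/4)^2 + (1 - (ε*s/2 + -(ε*s/2) + -1 + 1)/4)^2 = ε^2+2 from by linear_combination (ε^2/2) * hs2, ex]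
        congr 1
        ring
    simp only [heq]
    exact key.mono_left nhdsWithin_le_nhds
  -- correlations with Y
  · intro i
    have key : Tendsto (fun ε : ℝ => (3*s*ε/2) / (Real.sqrt (ε^2+2) * Real.sqrt ((21+2*s)/4)))
        (nhds 0) (nhds 0) := by
      have h1 : Tendsto (fun ε : ℝ => 3*s*ε/2) (nhds 0) (nhds 0) := by
        have : Continuous (fun ε : ℝ => 3*s*ε/2) := by continuity
        simpa using this.tendsto 0
      have h2 : Tendsto (fun ε : ℝ => Real.sqrt (ε^2+2) * Real.sqrt ((21+2*s)/4))
          (nhds 0) (nhds (Real.sqrt ((0:ℝ)^2+2) * Real.sqrt ((21+2*s)/4))) := by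
        have : Continuous (fun ε : ℝ => Real.sqrt (ε^2+2) * Real.sqrt ((21+2*s)/4)) := by
          continuity
        exact this.tendsto 0
      have hne : Real.sqrt ((0:ℝ)^2+2) * Real.sqrt ((21+2*s)/4) ≠ 0 := by
        have : (0:ℝ) < Real.sqrt ((0:ℝ)^2+2) * Real.sqrt ((21+2*s)/4) := by
          apply mul_pos (Real.sqrt_pos.mpr (by norm_num)) (Real.sqrt_pos.mpr (by nlinarith))
        linarith
      have h3 := h1.div h2 hne
      rw [zero_div] at h3
      exact h3
    have heq : ∀ ε : ℝ, sampleCorr (![![ε*s/2, -(ε*s/2), 1, -1], ![ε*s/2, -(ε*s/2), -1, 1]] i)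
        ![(s+3)/2, (s-3)/2, -1/2, -1/2]
        = (3*s*ε/2) / (Real.sqrt (ε^2+2) * Real.sqrt ((21+2*s)/4)) := by
      intro ε
      have ey : ((s+3)/2 - ((s+3)/2 + (s-3)/2 + -1/2 + -1/2)/4)^2 + ((s-3)/2 - ((s+3)/2 + (s-3)/2 + -1/2 + -1/2)/4)^2 + (-1/2 - ((s+3)/2 + (s-3)/2 + -1/2 + -1/2)/4)^2 + (-1/2 - ((s+3)/2 + (s-3)/2 + -1/2 + -1/2)/4)^2 = (21+2*s)/4 := by
        linear_combination (1/4 : ℝ) * hs2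
      fin_cases i
      · unfold sampleCorr
        simp only [Fin.sum_univ_four, Matrix.cons_val_zero, Matrix.cons_val_one, Matrix.head_cons,
          Matrix.cons_val_two, Matrix.tail_cons, Matrix.cons_val_three, Fin.isValue, Fin.zero_eta,
          Fin.mk_one]
        rw [show (ε*s/2 - (ε*s/2 + -(ε*s/2) + 1 + -1)/4)^2 + (-(ε*s/2) - (ε*s/2 + -(ε*s/2) + 1 + -1)/4)^2 + (1 - (ε*s/2 + -(ε*s/2) + 1 + -1)/4)^2 + (-1 - (ε*s/2 + -(ε*s/2) + 1 + -1)/4)^2 = ε^2+2 from by linear_combination (ε^2/2) * hs2, ey]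
        congr 1
        ring
      · unfold sampleCorr
        simp only [Fin.sum_univ_four, Matrix.cons_val_zero, Matrix.cons_val_one, Matrix.head_cons,
          Matrix.cons_val_two, Matrix.tail_cons, Matrix.cons_val_three, Fin.isValue, Fin.zero_eta,
          Fin.mk_one]
        rw [show (ε*s/2 - (ε*s/2 + -(ε*s/2) + -1 + 1)/4)^2 + (-(ε*s/2) - (ε*s/2 + -(ε*s/2) + -1 + 1)/4)^2 + (-1 - (ε*s/2 + -(ε*s/2) + -1 + 1)/4)^2 + (1 - (ε*s/2 + -(ε*s/2) + -1 + 1)/4)^2 = ε^2+2 from by linear_combination (ε^2/2) * hs2, ey]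
        congr 1
        ring
    simp only [heq]
    exact key.mono_left nhdsWithin_le_nhds
  -- simple regression coefficient positive
  · intro b b0 h
    simp only [Fin.sum_univ_four, Matrix.cons_val_zero, Matrix.cons_val_one, Matrix.head_cons,
      Matrix.cons_val_two, Matrix.tail_cons, Matrix.cons_val_three] at h
    have keyA : ∀ u : ℝ, 0 ≤ 4*u^2 - 2*u*(s - 1 - b*(1-s) - 4*b0) := by
      intro u
      have h1 := h b (b0 + u)
      nlinarith [h1]
    have keyB : ∀ t : ℝ, 0 ≤ 6*t^2 - 2*t*(3 - 6*b - b0*(1-s)) := by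
      intro t
      have h2 := h (b + t) b0
      have hh1 : t^2*s^2 = 2*t^2 := by linear_combination t^2*hs2
      have hh2 : (t*b)*s^2 = 2*(t*b) := by linear_combination (t*b)*hs2
      have hh3 : t*s^2 = 2*t := by linear_combination t*hs2
      nlinarith [h2, hh1, hh2, hh3]
    have eA : s - 1 - b*(1-s) - 4*b0 = 0 := by
      have := keyA ((s - 1 - b*(1-s) - 4*b0)/4)
      have h2 : (s - 1 - b*(1-s) - 4*b0)^2 ≤ 0 := by nlinarith [this]
      exact (pow_eq_zero_iff two_ne_zero).mp (le_antisymm h2 (sq_nonneg _))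
    have eB : 3 - 6*b - b0*(1-s) = 0 := by
      have := keyB ((3 - 6*b - b0*(1-s))/6)
      have h2 : (3 - 6*b - b0*(1-s))^2 ≤ 0 := by nlinarith [this]
      exact (pow_eq_zero_iff two_ne_zero).mp (le_antisymm h2 (sq_nonneg _))
    have hb : b*(21+2*s) = 15-2*s := by
      linear_combination (-(4:ℝ))*eB + (1-s)*eA + (1+b)*hs2
    nlinarith [hb, hs1, hs32]
  -- multiple regression: coefficient of X equals -1
  · refine ⟨1, by norm_num, ?_⟩
    intro ε hε _ b b0 c1 c2 h
    have hεne : ε ≠ 0 := ne_of_gt hε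
    have h1 := h (-1) 0 (3*s/(2*ε)) (3*s/(2*ε))
    simp only [Fin.sum_univ_four, Matrix.cons_val_zero, Matrix.cons_val_one, Matrix.head_cons,
      Matrix.cons_val_two, Matrix.tail_cons, Matrix.cons_val_three, Fin.isValue] at h1
    have e0 : (s + 3) / 2 - (-1 * ((3 - s) / 2) + 0 + 3 * s / (2 * ε) * (ε * s / 2) + 3 * s / (2 * ε) * (ε * s / 2)) = 0 := by
      field_simp
      linear_combination (-6) * hs2
    have e1 : (s - 3) / 2 - (-1 * ((-3 - s) / 2) + 0 + 3 * s / (2 * ε) * -(ε * s / 2) + 3 * s / (2 * ε) * -(ε * s / 2)) = 0 := by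
      field_simp
      linear_combination 6 * hs2
    have e2 : -1 / 2 - (-1 * (1 / 2) + 0 + 3 * s / (2 * ε) * 1 + 3 * s / (2 * ε) * -1) = (0:ℝ) := by
      ring
    have e3 : -1 / 2 - (-1 * (1 / 2) + 0 + 3 * s / (2 * ε) * -1 + 3 * s / (2 * ε) * 1) = (0:ℝ) := by
      ring
    rw [e0, e1, e2, e3] at h1
    norm_num at h1
    have q0 : (s + 3) / 2 - (b * ((3 - s) / 2) + b0 + c1 * (ε * s / 2) + c2 * (ε * s / 2)) = 0 := by
      have h2 : ((s + 3) / 2 - (b * ((3 - s) / 2) + b0 + c1 * (ε * s / 2) + c2 * (ε * s / 2)))^2 ≤ 0 := by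
        linarith [h1, sq_nonneg ((s - 3) / 2 - (b * ((-3 - s) / 2) + b0 + c1 * -(ε * s / 2) + c2 * -(ε * s / 2))), sq_nonneg (-1 / 2 - (b * (1 / 2) + b0 + c1 * 1 + c2 * -1)), sq_nonneg (-1 / 2 - (b * (1 / 2) + b0 + c1 * -1 + c2 * 1))]
      exact (pow_eq_zero_iff two_ne_zero).mp (le_antisymm h2 (sq_nonneg _))
    have q1 : (s - 3) / 2 - (b * ((-3 - s) / 2) + b0 + c1 * -(ε * s / 2) + c2 * -(ε * s / 2)) = 0 := by
      have h2 : ((s - 3) / 2 - (b * ((-3 - s) / 2) + b0 + c1 * -(ε * s / 2) + c2 * -(ε * s / 2)))^2 ≤ 0 := by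
        linarith [h1, sq_nonneg ((s + 3) / 2 - (b * ((3 - s) / 2) + b0 + c1 * (ε * s / 2) + c2 * (ε * s / 2))), sq_nonneg (-1 / 2 - (b * (1 / 2) + b0 + c1 * 1 + c2 * -1)), sq_nonneg (-1 / 2 - (b * (1 / 2) + b0 + c1 * -1 + c2 * 1))]
      exact (pow_eq_zero_iff two_ne_zero).mp (le_antisymm h2 (sq_nonneg _))
    have q2 : -1 / 2 - (b * (1 / 2) + b0 + c1 * 1 + c2 * -1) = 0 := by
      have h2 : (-1 / 2 - (b * (1 / 2) + b0 + c1 * 1 + c2 * -1))^2 ≤ 0 := by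
        linarith [h1, sq_nonneg ((s + 3) / 2 - (b * ((3 - s) / 2) + b0 + c1 * (ε * s / 2) + c2 * (ε * s / 2))), sq_nonneg ((s - 3) / 2 - (b * ((-3 - s) / 2) + b0 + c1 * -(ε * s / 2) + c2 * -(ε * s / 2))), sq_nonneg (-1 / 2 - (b * (1 / 2) + b0 + c1 * -1 + c2 * 1))]
      exact (pow_eq_zero_iff two_ne_zero).mp (le_antisymm h2 (sq_nonneg _))
    have q3 : -1 / 2 - (b * (1 / 2) + b0 + c1 * -1 + c2 * 1) = 0 := by
      have h2 : (-1 / 2 - (b * (1 / 2) + b0 + c1 * -1 + c2 * 1))^2 ≤ 0 := by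
        linarith [h1, sq_nonneg ((s + 3) / 2 - (b * ((3 - s) / 2) + b0 + c1 * (ε * s / 2) + c2 * (ε * s / 2))), sq_nonneg ((s - 3) / 2 - (b * ((-3 - s) / 2) + b0 + c1 * -(ε * s / 2) + c2 * -(ε * s / 2))), sq_nonneg (-1 / 2 - (b * (1 / 2) + b0 + c1 * 1 + c2 * -1))]
      exact (pow_eq_zero_iff two_ne_zero).mp (le_antisymm h2 (sq_nonneg _))
    have hkey : (b+1)*(1+s) = 0 := by linear_combination q0 + q1 - q2 - q3
    rcases mul_eq_zero.mp hkey with h' | h'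
    · linarith
    · linarith
end
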